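/- Let p, q ∈ P(k,k) be projective partitions with q ⪯ p (i.e., pq = q). Then t(q) ≤ t(p), with equality if and only if p = q. -/

import Mathlib

/-- A two-row partition with `k` upper and `l` lower points, encoded as the
equivalence relation whose classes are the blocks. -/
abbrev PP (k l : ℕ) := Setoid (Fin k ⊕ Fin l)

/-- The involution `p*` (turning `p` upside down). -/
def swapP {k l : ℕ} (p : PP k l) : PP l k := Setoid.comap Sum.swap p

/-- Disjoint union of two setoids. -/
def sumSetoid {α β : Type*} (s : Setoid α) (t : Setoid β) : Setoid (α ⊕ β) where
  r := Sum.LiftRel s.r t.r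
  iseqv := by
    refine ⟨fun x => ?_, fun {x y} h => ?_, fun {x y z} h1 h2 => ?_⟩
    · cases x with
      | inl a => exact Sum.LiftRel.inl (s.iseqv.refl a)
      | inr b => exact Sum.LiftRel.inr (t.iseqv.refl b)
    · cases h with
      | inl h => exact Sum.LiftRel.inl (s.iseqv.symm h)
      | inr h => exact Sum.LiftRel.inr (t.iseqv.symm h)
    · cases h1 with
      | inl h1 =>
        cases h2 with
        | inl h2 => exact Sum.LiftRel.inl (s.iseqv.trans h1 h2)
      | inr h1 =>
        cases h2 with
        | inr h2 => exact Sum.LiftRel.inr (t.iseqv.trans h1 h2)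

/-- Reindexing equivalence for the horizontal concatenation (tensor product). -/
def tensorEquiv (k l k' l' : ℕ) :
    (Fin (k + k') ⊕ Fin (l + l')) ≃ ((Fin k ⊕ Fin l) ⊕ (Fin k' ⊕ Fin l')) :=
  (Equiv.sumCongr finSumFinEquiv.symm finSumFinEquiv.symm).trans
    (Equiv.sumSumSumComm (Fin k) (Fin k') (Fin l) (Fin l'))

/-- Tensor product (horizontal concatenation) of partitions. -/
def tensorP {k l k' l' : ℕ} (p : PP k l) (q : PP k' l') : PP (k + k') (l + l') :=
  Setoid.comap (tensorEquiv k l k' l') (sumSetoid p q)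

/-- The relation on `k ⊔ l ⊔ m` points generated by `p` (upper part) and `q` (lower part). -/
def midRel {k l m : ℕ} (p : PP k l) (q : PP l m) :
    (Fin k ⊕ (Fin l ⊕ Fin m)) → (Fin k ⊕ (Fin l ⊕ Fin m)) → Prop := fun x y =>
  (∃ a b : Fin k ⊕ Fin l, p.r a b ∧ x = Sum.map id Sum.inl a ∧ y = Sum.map id Sum.inl b) ∨
  (∃ a b : Fin l ⊕ Fin m, q.r a b ∧ x = Sum.inr a ∧ y = Sum.inr b)

/-- The equivalence relation generated on `k ⊔ l ⊔ m` in the composition procedure. -/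
def bigS {k l m : ℕ} (p : PP k l) (q : PP l m) : Setoid (Fin k ⊕ (Fin l ⊕ Fin m)) :=
  Relation.EqvGen.setoid (midRel p q)

/-- `compP q p` is the vertical composition `qp` (apply `p : P(k,l)` first, then `q : P(l,m)`). -/
def compP {k l m : ℕ} (q : PP l m) (p : PP k l) : PP k m :=
  Setoid.comap (Sum.map id Sum.inr) (bigS p q)

/-- `rlP q p` : the number of closed loops removed in the composition `qp`,
i.e. the blocks of the generated relation consisting only of middle points. -/
noncomputable def rlP {k l m : ℕ} (q : PP l m) (p : PP k l) : ℕ :=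
  Nat.card {c : Quotient (bigS p q) //
    ∀ x, Quotient.mk (bigS p q) x = c → ∃ b : Fin l, x = Sum.inr (Sum.inl b)}

/-- `b(p)` : number of blocks. -/
noncomputable def bP {k l : ℕ} (p : PP k l) : ℕ := Nat.card (Quotient p)

/-- `t(p)` : number of through-blocks (blocks meeting both rows). -/
noncomputable def tP {k l : ℕ} (p : PP k l) : ℕ :=
  Nat.card {c : Quotient p // (∃ a : Fin k, Quotient.mk p (Sum.inl a) = c) ∧
    (∃ b : Fin l, Quotient.mk p (Sum.inr b) = c)}

/-- `β(p) = b(p) - t(p)` : number of non-through-blocks. -/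
noncomputable def betaP {k l : ℕ} (p : PP k l) : ℕ := bP p - tP p

/-- The identity partition `|^{⊗k}`. -/
def idP (k : ℕ) : PP k k := Setoid.ker (Sum.elim (fun i : Fin k => i) (fun i : Fin k => i))

/-- A pair partition: all blocks have size two. -/
def isPair {k l : ℕ} (p : PP k l) : Prop := ∀ x, Nat.card {y // p.r x y} = 2

/-- A through-partition: a pair partition each of whose blocks connects exactly one
upper point to exactly one lower point. -/
def isThrough {k : ℕ} (p : PP k k) : Prop :=
  isPair p ∧ (∀ a b : Fin k, p.r (Sum.inl a) (Sum.inl b) → a = b) ∧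
    (∀ a b : Fin k, p.r (Sum.inr a) (Sum.inr b) → a = b)

/-- A building partition. -/
def isBuilding {k l : ℕ} (p : PP k l) : Prop :=
  (∀ b b' : Fin l, p.r (Sum.inr b) (Sum.inr b') → b = b') ∧
  (∀ b : Fin l, ∃ a : Fin k, p.r (Sum.inl a) (Sum.inr b)) ∧
  (∀ b b' : Fin l, ∀ a a' : Fin k, b < b' →
    IsLeast {x : Fin k | p.r (Sum.inl x) (Sum.inr b)} a →
    IsLeast {x : Fin k | p.r (Sum.inl x) (Sum.inr b')} a' → a < a')

/-- A projective partition: symmetric and idempotent. -/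
def isProjective {k : ℕ} (p : PP k k) : Prop := swapP p = p ∧ compP p p = p

/-- Linear position of the points, reading the upper row left to right and then the
lower row right to left. -/
def posP (k l : ℕ) : Fin k ⊕ Fin l → ℕ :=
  Sum.elim (fun i => (i : ℕ)) (fun j => k + (l - 1 - (j : ℕ)))

/-- Noncrossing partitions. -/
def isNC {k l : ℕ} (p : PP k l) : Prop :=
  ¬ ∃ x1 x2 x3 x4 : Fin k ⊕ Fin l,
    posP k l x1 < posP k l x2 ∧ posP k l x2 < posP k l x3 ∧ posP k l x3 < posP k l x4 ∧
    p.r x1 x3 ∧ p.r x2 x4 ∧ ¬ p.r x1 x2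

section AuxPP

lemma pp_eqvGen_iff_rtg {α : Type*} {R : α → α → Prop} (hs : Symmetric R) {x y : α} :
    Relation.EqvGen R x y ↔ Relation.ReflTransGen R x y := by
  constructor
  · intro h
    induction h with
    | rel a b hab => exact Relation.ReflTransGen.single hab
    | refl a => exact Relation.ReflTransGen.refl
    | symm a b _ ih => haveI : Std.Symm R := ⟨fun _ _ h => hs h⟩; exact Std.Symm.symm _ _ ih
    | trans a b c _ _ ih1 ih2 => exact ih1.trans ih2
  · intro h
    induction h with
    | refl => exact Relation.EqvGen.refl x
    | tail _ hbc ih => exact Relation.EqvGen.trans _ _ _ ih (Relation.EqvGen.rel _ _ hbc)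

variable {k : ℕ}

lemma pp_E_top {l m : ℕ} (p : PP k l) (q : PP l m) {a b : Fin k ⊕ Fin l} (h : p.r a b) :
    Relation.EqvGen (midRel p q) (Sum.map id Sum.inl a) (Sum.map id Sum.inl b) :=
  Relation.EqvGen.rel _ _ (Or.inl ⟨a, b, h, rfl, rfl⟩)

lemma pp_E_bot {l m : ℕ} (p : PP k l) (q : PP l m) {a b : Fin l ⊕ Fin m} (h : q.r a b) :
    Relation.EqvGen (midRel p q) (Sum.inr a) (Sum.inr b) :=
  Relation.EqvGen.rel _ _ (Or.inr ⟨a, b, h, rfl, rfl⟩)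

lemma pp_midRel_symm {l m : ℕ} (p : PP k l) (q : PP l m) : Symmetric (midRel p q) := by
  rintro x y (⟨a, b, h, rfl, rfl⟩ | ⟨a, b, h, rfl, rfl⟩)
  · exact Or.inl ⟨b, a, p.iseqv.symm h, rfl, rfl⟩
  · exact Or.inr ⟨b, a, q.iseqv.symm h, rfl, rfl⟩

lemma pp_swap_rel (p : PP k k) (hs : swapP p = p) (x y : Fin k ⊕ Fin k) :
    p.r (Sum.swap x) (Sum.swap y) ↔ p.r x y := by
  conv_rhs => rw [← hs]
  exact Iff.rfl

lemma pp_PL1 (p q : PP k k) {a d : Fin k}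
    (h : Relation.EqvGen (midRel q p) (Sum.inl a) (Sum.inr (Sum.inr d))) :
    ∃ c, p.r (Sum.inl c) (Sum.inr d) := by
  rw [pp_eqvGen_iff_rtg (pp_midRel_symm q p)] at h
  suffices H : ∀ w, Relation.ReflTransGen (midRel q p) (Sum.inl a) w →
      ∀ d : Fin k, w = Sum.inr (Sum.inr d) → ∃ c, p.r (Sum.inl c) (Sum.inr d) by
    exact H _ h d rfl
  intro w hw
  induction hw with
  | refl => intro d hd; simp at hd
  | @tail b c hab hbc ih =>
    intro d hd
    subst hd
    rcases hbc with ⟨u, v, huv, he1, he2⟩ | ⟨u, v, huv, he1, he2⟩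
    · cases v <;> simp [Sum.map] at he2
    · obtain rfl : v = Sum.inr d := (Sum.inr.inj he2).symm
      cases u with
      | inl c => exact ⟨c, huv⟩
      | inr d' =>
        obtain ⟨c, hc⟩ := ih d' he1
        exact ⟨c, p.iseqv.trans hc huv⟩

lemma pp_PL2 (p q : PP k k) {d d' : Fin k}
    (h : Relation.EqvGen (midRel q p) (Sum.inr (Sum.inr d)) (Sum.inr (Sum.inr d'))) :
    p.r (Sum.inr d) (Sum.inr d') ∨ ∃ c, p.r (Sum.inl c) (Sum.inr d) := by
  rw [pp_eqvGen_iff_rtg (pp_midRel_symm q p)] at h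
  suffices H : ∀ w, Relation.ReflTransGen (midRel q p) (Sum.inr (Sum.inr d)) w →
      (∃ c, p.r (Sum.inl c) (Sum.inr d)) ∨
        (∃ d'', w = Sum.inr (Sum.inr d'') ∧ p.r (Sum.inr d) (Sum.inr d'')) by
    rcases H _ h with h1 | ⟨d'', he, h2⟩
    · exact Or.inr h1
    · obtain rfl : d' = d'' := by simpa using he
      exact Or.inl h2
  intro w hw
  induction hw with
  | refl => exact Or.inr ⟨d, rfl, p.iseqv.refl _⟩
  | @tail b c hab hbc ih =>
    rcases ih with h1 | ⟨d'', rfl, h2⟩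
    · exact Or.inl h1
    · rcases hbc with ⟨u, v, huv, he1, he2⟩ | ⟨u, v, huv, he1, he2⟩
      · cases u <;> simp [Sum.map] at he1
      · obtain rfl : u = Sum.inr d'' := (Sum.inr.inj he1).symm
        subst he2
        cases v with
        | inl c => exact Or.inl ⟨c, p.iseqv.symm (p.iseqv.trans h2 huv)⟩
        | inr d3 => exact Or.inr ⟨d3, rfl, p.iseqv.trans h2 huv⟩

lemma pp_proj_cross (p : PP k k) (hp : isProjective p) {a b : Fin k}
    (h : p.r (Sum.inl a) (Sum.inr b)) :
    p.r (Sum.inl a) (Sum.inr a) ∧ p.r (Sum.inl b) (Sum.inr b) ∧ p.r (Sum.inl a) (Sum.inl b) := by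
  have h2 : p.r (Sum.inl b) (Sum.inr a) :=
    p.iseqv.symm ((pp_swap_rel p hp.1 (Sum.inl a) (Sum.inr b)).mpr h)
  have hidem := hp.2
  have hrel : ∀ x y, p.r x y ↔
      Relation.EqvGen (midRel p p) (Sum.map id Sum.inr x) (Sum.map id Sum.inr y) := by
    intro x y
    conv_lhs => rw [← hidem]
    exact Iff.rfl
  have haa : p.r (Sum.inl a) (Sum.inr a) := by
    rw [hrel]
    exact Relation.EqvGen.trans _ _ _ (pp_E_top p p h) (pp_E_bot p p h2)
  have hbb : p.r (Sum.inl b) (Sum.inr b) := by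
    rw [hrel]
    exact Relation.EqvGen.trans _ _ _ (pp_E_top p p h2) (pp_E_bot p p h)
  exact ⟨haa, hbb, p.iseqv.trans h (p.iseqv.symm hbb)⟩

lemma pp_crossChar (p : PP k k) (hp : isProjective p) (a b : Fin k) :
    p.r (Sum.inl a) (Sum.inr b) ↔ p.r (Sum.inl a) (Sum.inr a) ∧ p.r (Sum.inl a) (Sum.inl b) := by
  constructor
  · intro h
    exact ⟨(pp_proj_cross p hp h).1, (pp_proj_cross p hp h).2.2⟩
  · rintro ⟨h1, h2⟩
    have h3 : p.r (Sum.inr a) (Sum.inr b) := (pp_swap_rel p hp.1 (Sum.inl a) (Sum.inl b)).mpr h2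
    exact p.iseqv.trans h1 h3

end AuxPP

/-- if `q ⪯ p` then `t(q) ≤ t(p)`, with equality iff `p = q`. -/
theorem order_through_block_comparison {k : ℕ} (p q : PP k k)
    (hp : isProjective p) (hq : isProjective q) (hle : compP p q = q) :
    tP q ≤ tP p ∧ (tP q = tP p ↔ p = q) := by
  classical
  have hsp := hp.1
  have hsq := hq.1
  have hrel : ∀ x y, q.r x y ↔
      Relation.EqvGen (midRel q p) (Sum.map id Sum.inr x) (Sum.map id Sum.inr y) := by
    intro x y
    conv_lhs => rw [← hle]
    exact Iff.rfl
  -- p's rows relation is contained in q's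
  have hUpUq : ∀ a b : Fin k, p.r (Sum.inl a) (Sum.inl b) → q.r (Sum.inl a) (Sum.inl b) := by
    intro a b h
    have h' : p.r (Sum.inr a) (Sum.inr b) := (pp_swap_rel p hsp (Sum.inl a) (Sum.inl b)).mpr h
    have h2 : q.r (Sum.inr a) (Sum.inr b) := (hrel _ _).mpr (pp_E_bot q p h')
    exact (pp_swap_rel q hsq (Sum.inl a) (Sum.inl b)).mp h2
  have hTqTp : ∀ a : Fin k, q.r (Sum.inl a) (Sum.inr a) → p.r (Sum.inl a) (Sum.inr a) := by
    intro a h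
    obtain ⟨c, hc⟩ := pp_PL1 p q ((hrel _ _).mp h)
    exact (pp_proj_cross p hp hc).2.1
  have hthroughClosed_q : ∀ a d : Fin k, q.r (Sum.inl a) (Sum.inr a) →
      q.r (Sum.inl a) (Sum.inl d) → q.r (Sum.inl d) (Sum.inr d) := by
    intro a d h1 h2
    have h3 : q.r (Sum.inr a) (Sum.inr d) := (pp_swap_rel q hsq (Sum.inl a) (Sum.inl d)).mpr h2
    exact q.iseqv.trans (q.iseqv.trans (q.iseqv.symm h2) h1) h3
  have hex : ∀ c : {c : Quotient q // (∃ a : Fin k, Quotient.mk q (Sum.inl a) = c) ∧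
      (∃ b : Fin k, Quotient.mk q (Sum.inr b) = c)},
      ∃ a : Fin k, Quotient.mk q (Sum.inl a) = c.1 ∧ q.r (Sum.inl a) (Sum.inr a) ∧
        p.r (Sum.inl a) (Sum.inr a) := by
    rintro ⟨c, ⟨a, ha⟩, ⟨b, hb⟩⟩
    have hab : q.r (Sum.inl a) (Sum.inr b) := Quotient.exact (ha.trans hb.symm)
    have h1 := (pp_proj_cross q hq hab).1
    exact ⟨a, ha, h1, hTqTp a h1⟩
  choose g hg1 hg2 hg3 using hex
  let f : {c : Quotient q // (∃ a : Fin k, Quotient.mk q (Sum.inl a) = c) ∧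
      (∃ b : Fin k, Quotient.mk q (Sum.inr b) = c)} →
      {c : Quotient p // (∃ a : Fin k, Quotient.mk p (Sum.inl a) = c) ∧
      (∃ b : Fin k, Quotient.mk p (Sum.inr b) = c)} := fun c =>
    ⟨Quotient.mk p (Sum.inl (g c)), ⟨g c, rfl⟩, ⟨g c, Quotient.sound (p.iseqv.symm (hg3 c))⟩⟩
  have hfinj : Function.Injective f := by
    intro c c' hcc
    have h1 : p.r (Sum.inl (g c)) (Sum.inl (g c')) :=
      Quotient.exact (congrArg Subtype.val hcc)
    have h2 : Quotient.mk q (Sum.inl (g c)) = Quotient.mk q (Sum.inl (g c')) :=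
      Quotient.sound (hUpUq _ _ h1)
    exact Subtype.ext ((hg1 c).symm.trans (h2.trans (hg1 c')))
  have hle1 : tP q ≤ tP p := Nat.card_le_card_of_injective f hfinj
  refine ⟨hle1, ?_, ?_⟩
  · intro hcard
    have hbij : Function.Bijective f :=
      (Nat.bijective_iff_injective_and_card f).mpr ⟨hfinj, hcard⟩
    have key2 : ∀ d : Fin k, p.r (Sum.inl d) (Sum.inr d) →
        ∃ c, (f c).1 = Quotient.mk p (Sum.inl d) ∧ c.1 = Quotient.mk q (Sum.inl d) := by
      intro d hd
      obtain ⟨c, hc⟩ := hbij.2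
        ⟨Quotient.mk p (Sum.inl d), ⟨d, rfl⟩, ⟨d, Quotient.sound (p.iseqv.symm hd)⟩⟩
      have h1 : (f c).1 = Quotient.mk p (Sum.inl d) := congrArg Subtype.val hc
      have h2 : p.r (Sum.inl (g c)) (Sum.inl d) := Quotient.exact h1
      exact ⟨c, h1, (hg1 c).symm.trans (Quotient.sound (hUpUq _ _ h2))⟩
    have hTpTq : ∀ d : Fin k, p.r (Sum.inl d) (Sum.inr d) → q.r (Sum.inl d) (Sum.inr d) := by
      intro d hd
      obtain ⟨c, hc1, hc2⟩ := key2 d hd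
      have h2 : p.r (Sum.inl (g c)) (Sum.inl d) := Quotient.exact hc1
      exact hthroughClosed_q (g c) d (hg2 c) (hUpUq _ _ h2)
    have hUqUp_th : ∀ d d' : Fin k, p.r (Sum.inl d) (Sum.inr d) → p.r (Sum.inl d') (Sum.inr d') →
        q.r (Sum.inl d) (Sum.inl d') → p.r (Sum.inl d) (Sum.inl d') := by
      intro d d' hd hd' hqr
      obtain ⟨c1, hc1a, hc1b⟩ := key2 d hd
      obtain ⟨c2, hc2a, hc2b⟩ := key2 d' hd'
      have hcc : c1 = c2 := Subtype.ext (hc1b.trans ((Quotient.sound hqr).trans hc2b.symm))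
      subst hcc
      exact p.iseqv.trans (p.iseqv.symm (Quotient.exact hc1a)) (Quotient.exact hc2a)
    have hUqUp : ∀ d d' : Fin k, q.r (Sum.inl d) (Sum.inl d') → p.r (Sum.inl d) (Sum.inl d') := by
      intro d d' h
      have h' : q.r (Sum.inr d) (Sum.inr d') := (pp_swap_rel q hsq (Sum.inl d) (Sum.inl d')).mpr h
      rcases pp_PL2 p q ((hrel _ _).mp h') with h1 | ⟨c, hc⟩
      · exact (pp_swap_rel p hsp (Sum.inl d) (Sum.inl d')).mp h1
      · have hdT : p.r (Sum.inl d) (Sum.inr d) := (pp_proj_cross p hp hc).2.1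
        have hdq : q.r (Sum.inl d) (Sum.inr d) := hTpTq d hdT
        have hd'q : q.r (Sum.inl d') (Sum.inr d') := hthroughClosed_q d d' hdq h
        exact hUqUp_th d d' hdT (hTqTp d' hd'q) h
    have hupper : ∀ a b : Fin k, (p.r (Sum.inl a) (Sum.inl b) ↔ q.r (Sum.inl a) (Sum.inl b)) :=
      fun a b => ⟨hUpUq a b, hUqUp a b⟩
    have hthrough : ∀ a : Fin k, (p.r (Sum.inl a) (Sum.inr a) ↔ q.r (Sum.inl a) (Sum.inr a)) :=
      fun a => ⟨hTpTq a, hTqTp a⟩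
    have hcross : ∀ a b : Fin k, (p.r (Sum.inl a) (Sum.inr b) ↔ q.r (Sum.inl a) (Sum.inr b)) := by
      intro a b
      rw [pp_crossChar p hp a b, pp_crossChar q hq a b, hupper a b, hthrough a]
    apply Setoid.ext
    intro x y
    cases x with
    | inl a =>
      cases y with
      | inl b => exact hupper a b
      | inr b => exact hcross a b
    | inr a =>
      cases y with
      | inl b =>
        constructor
        · intro h; exact q.iseqv.symm ((hcross b a).mp (p.iseqv.symm h))
        · intro h; exact p.iseqv.symm ((hcross b a).mpr (q.iseqv.symm h))
      | inr b =>
        exact (pp_swap_rel p hsp (Sum.inl a) (Sum.inl b)).trans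
          ((hupper a b).trans (pp_swap_rel q hsq (Sum.inl a) (Sum.inl b)).symm)
  · intro hpq
    rw [hpq]
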